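/- Let (Ω, P) be a finite probability space carrying random variables S : Ω → {0,1}, Y : Ω → {0,1} with P(S=s, Y=0) > 0 for s ∈ {0,1}, and X : Ω → α with α finite, and let c : α → {0,1} be any classifier. Let q_s(x) = P(X = x | S = s, Y = 0), p_s = P(c(X) = 1 | S = s, Y = 0), and FPR = P(c(X) = 1 | Y = 0). Then FPR ≤ (p₀ + p₁)/2 + ½·√(2·JS(q₀, q₁)). -/

import Mathlib

open Finset

open Classical in
/-- Probability of an event on a finite probability space given by a weight function `P`. -/
noncomputable def pr {Ω : Type*} [Fintype Ω] (P : Ω → ℝ) (E : Ω → Prop) : ℝ :=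
  ∑ ω, if E ω then P ω else 0

open Classical in
/-- Kullback–Leibler divergence of finitely supported pmfs (natural logarithm),
restricted to the support of `p`. -/
noncomputable def KL {α : Type*} [Fintype α] (p q : α → ℝ) : ℝ :=
  ∑ x, if 0 < p x then p x * Real.log (p x / q x) else 0

/-- Jensen–Shannon divergence of finitely supported pmfs. -/
noncomputable def JS {α : Type*} [Fintype α] (p q : α → ℝ) : ℝ :=
  KL p (fun x => (p x + q x) / 2) / 2 + KL q (fun x => (p x + q x) / 2) / 2


-- log t ≥ 1 - 1/t for t > 0
lemma log_ge (t : ℝ) (ht : 0 < t) : 1 - 1/t ≤ Real.log t := by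
  have h := Real.log_le_sub_one_of_pos (show (0:ℝ) < 1/t by positivity)
  rw [Real.log_div one_ne_zero (ne_of_gt ht), Real.log_one] at h
  linarith

noncomputable def hfun (t : ℝ) : ℝ := (t+1) * Real.log t - 2*(t-1)

lemma hfun_hasDeriv (t : ℝ) (ht : 0 < t) :
    HasDerivAt hfun (Real.log t + t⁻¹ - 1) t := by
  have h1 : HasDerivAt (fun t : ℝ => (t+1) * Real.log t)
      (1 * Real.log t + (t+1) * t⁻¹) t := by
    exact ((hasDerivAt_id t).add_const 1).mul (Real.hasDerivAt_log (ne_of_gt ht))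
  have h2 : HasDerivAt (fun t : ℝ => 2*(t-1)) 2 t := by
    simpa using ((hasDerivAt_id t).sub_const 1).const_mul 2
  have : HasDerivAt hfun (1 * Real.log t + (t+1) * t⁻¹ - 2) t := h1.sub h2
  convert this using 1
  field_simp
  ring

lemma hfun_mono : MonotoneOn hfun (Set.Ioi 0) := by
  apply monotoneOn_of_deriv_nonneg (convex_Ioi 0)
  · exact fun t ht => (hfun_hasDeriv t ht).continuousAt.continuousWithinAt
  · intro t ht
    rw [interior_Ioi] at ht
    exact (hfun_hasDeriv t ht).differentiableAt.differentiableWithinAt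
  · intro t ht
    rw [interior_Ioi] at ht
    rw [(hfun_hasDeriv t ht).deriv]
    have := log_ge t ht; rw [one_div] at this
    linarith

noncomputable def gfun (t : ℝ) : ℝ := (t+2) * (t * Real.log t - t + 1) - (3/2)*(t-1)^2

lemma gfun_hasDeriv (t : ℝ) (ht : 0 < t) : HasDerivAt gfun (2 * hfun t) t := by
  have hl : HasDerivAt (fun t : ℝ => t * Real.log t) (1 * Real.log t + t * t⁻¹) t :=
    (hasDerivAt_id t).mul (Real.hasDerivAt_log (ne_of_gt ht))
  have h1 : HasDerivAt (fun t : ℝ => t * Real.log t - t + 1)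
      (1 * Real.log t + t * t⁻¹ - 1) t := (hl.sub (hasDerivAt_id t)).add_const 1
  have h2 : HasDerivAt (fun t : ℝ => (t+2) * (t * Real.log t - t + 1))
      (1 * (t * Real.log t - t + 1) + (t+2) * (1 * Real.log t + t * t⁻¹ - 1)) t :=
    ((hasDerivAt_id t).add_const 2).mul h1
  have h3 : HasDerivAt (fun t : ℝ => (3/2)*(t-1)^2) ((3/2)*(2*(t-1))) t := by
    simpa using (((hasDerivAt_id t).sub_const 1).pow 2).const_mul (3/2:ℝ)
  have : HasDerivAt gfun (1 * (t * Real.log t - t + 1) + (t+2) * (1 * Real.log t + t * t⁻¹ - 1)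
      - (3/2)*(2*(t-1))) t := h2.sub h3
  convert this using 1
  unfold hfun
  field_simp
  ring

lemma gfun_nonneg (t : ℝ) (ht : 0 < t) : 0 ≤ gfun t := by
  have h1 : gfun 1 = 0 := by simp [gfun]
  rcases le_or_gt 1 t with h | h
  · -- monotone on Ici 1
    have mono : MonotoneOn gfun (Set.Ici 1) := by
      apply monotoneOn_of_deriv_nonneg (convex_Ici 1)
      · exact fun s hs => (gfun_hasDeriv s (lt_of_lt_of_le one_pos hs)).continuousAt.continuousWithinAt
      · intro s hs
        rw [interior_Ici] at hs
        exact (gfun_hasDeriv s (lt_trans one_pos hs)).differentiableAt.differentiableWithinAt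
      · intro s hs
        rw [interior_Ici] at hs
        rw [(gfun_hasDeriv s (lt_trans one_pos hs)).deriv]
        have h0 : hfun 1 = 0 := by simp [hfun]
        have := hfun_mono (Set.mem_Ioi.mpr one_pos) (Set.mem_Ioi.mpr (lt_trans one_pos hs)) hs.le
        linarith
    have := mono (Set.mem_Ici.mpr le_rfl) (Set.mem_Ici.mpr h) h
    linarith
  · have anti : AntitoneOn gfun (Set.Ioc 0 1) := by
      apply antitoneOn_of_deriv_nonpos (convex_Ioc 0 1)
      · exact fun s hs => (gfun_hasDeriv s hs.1).continuousAt.continuousWithinAt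
      · intro s hs
        rw [interior_Ioc] at hs
        exact (gfun_hasDeriv s hs.1).differentiableAt.differentiableWithinAt
      · intro s hs
        rw [interior_Ioc] at hs
        rw [(gfun_hasDeriv s hs.1).deriv]
        have h0 : hfun 1 = 0 := by simp [hfun]
        have := hfun_mono (Set.mem_Ioi.mpr hs.1) (Set.mem_Ioi.mpr one_pos) hs.2.le
        linarith
    have := anti (Set.mem_Ioc.mpr ⟨ht, h.le⟩) (Set.mem_Ioc.mpr ⟨one_pos, le_rfl⟩) h.le
    linarith


-- cleared-denominator form
lemma A1 (p m : ℝ) (hp : 0 < p) (hm : 0 < m) :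
    (3/2)*(p-m)^2 ≤ (p + 2*m) * (p * Real.log (p/m) - p + m) := by
  have hg := gfun_nonneg (p/m) (by positivity)
  unfold gfun at hg
  have key : m^2 * ((p/m+2)*((p/m)*Real.log (p/m) - p/m + 1) - (3/2)*(p/m-1)^2)
      = (p+2*m)*(p*Real.log (p/m) - p + m) - (3/2)*(p-m)^2 := by
    field_simp
  nlinarith [mul_nonneg (sq_nonneg m) hg]

open Classical in
lemma kl_point (p q : ℝ) (hp : 0 ≤ p) (hq : 0 ≤ q) :
    (p - q)/2 + (3/8)*(p - q)^2/(2*p + q) ≤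
      (if 0 < p then p * Real.log (p/((p+q)/2)) else 0) := by
  by_cases hpp : 0 < p
  · rw [if_pos hpp]
    have hm : (0:ℝ) < (p+q)/2 := by positivity
    have hA := A1 p ((p+q)/2) hpp hm
    have h2pq : (0:ℝ) < 2*p + q := by positivity
    rw [div_add_div _ _ two_ne_zero (ne_of_gt h2pq), div_le_iff₀ (by positivity)]
    nlinarith [hA]
  · have hp0 : p = 0 := le_antisymm (not_lt.mp hpp) hp
    rw [if_neg hpp, hp0]
    rcases eq_or_lt_of_le hq with hq0 | hq0
    · simp [← hq0]
    · rw [show ((0:ℝ) - q)^2 = q^2 by ring, show 2*(0:ℝ)+q = q by ring]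
      rw [show q^2 = q*q by ring, mul_div_assoc, mul_div_assoc,
        div_self (ne_of_gt hq0)]
      linarith


lemma point_combine (p q : ℝ) (hp : 0 ≤ p) (hq : 0 ≤ q) :
    (p-q)^2/(p+q) ≤ (3/4)*((p-q)^2/(2*p+q)) + (3/4)*((p-q)^2/(p+2*q)) := by
  rcases eq_or_lt_of_le (by positivity : (0:ℝ) ≤ p + q) with h | h
  · have hp0 : p = 0 := by linarith
    have hq0 : q = 0 := by linarith
    simp [hp0, hq0]
  · have ha : (0:ℝ) < 2*p+q := by linarith
    have hb : (0:ℝ) < p+2*q := by linarith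
    have key : (3/4)*(1/(2*p+q)) + (3/4)*(1/(p+2*q)) - 1/(p+q)
        = ((1/4)*(p-q)^2) / ((2*p+q)*((p+2*q)*(p+q))) := by
      field_simp
      ring
    have hnn : 0 ≤ (3/4)*(1/(2*p+q)) + (3/4)*(1/(p+2*q)) - 1/(p+q) := by
      rw [key]; positivity
    have := mul_le_mul_of_nonneg_left (by linarith : 1/(p+q) ≤ (3/4)*(1/(2*p+q)) + (3/4)*(1/(p+2*q))) (sq_nonneg (p-q))
    calc (p-q)^2/(p+q) = (p-q)^2 * (1/(p+q)) := by ring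
    _ ≤ (p-q)^2 * ((3/4)*(1/(2*p+q)) + (3/4)*(1/(p+2*q))) := this
    _ = (3/4)*((p-q)^2/(2*p+q)) + (3/4)*((p-q)^2/(p+2*q)) := by ring

lemma kl_lower {α : Type*} [Fintype α] (p q : α → ℝ)
    (hp : ∀ x, 0 ≤ p x) (hq : ∀ x, 0 ≤ q x)
    (hp1 : ∑ x, p x = 1) (hq1 : ∑ x, q x = 1) :
    (3/8) * ∑ x, (p x - q x)^2/(2*p x + q x) ≤ KL p (fun x => (p x + q x)/2) := by
  have h1 : ∑ x, ((p x - q x)/2 + (3/8)*(p x - q x)^2/(2*p x + q x)) ≤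
      KL p (fun x => (p x + q x)/2) := by
    apply Finset.sum_le_sum
    intro x _
    exact kl_point (p x) (q x) (hp x) (hq x)
  have h2 : ∑ x, ((p x - q x)/2 + (3/8)*(p x - q x)^2/(2*p x + q x))
      = (3/8) * ∑ x, (p x - q x)^2/(2*p x + q x) := by
    rw [Finset.sum_add_distrib]
    have : ∑ x, (p x - q x)/2 = 0 := by
      rw [← Finset.sum_div, Finset.sum_sub_distrib, hp1, hq1]
      norm_num
    rw [this, Finset.mul_sum]
    simp [mul_div_assoc, mul_comm, mul_left_comm]
    congr 1
    ext x
    ring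
  linarith [h2 ▸ h1]

lemma js_lower {α : Type*} [Fintype α] (p q : α → ℝ)
    (hp : ∀ x, 0 ≤ p x) (hq : ∀ x, 0 ≤ q x)
    (hp1 : ∑ x, p x = 1) (hq1 : ∑ x, q x = 1) :
    ∑ x, (p x - q x)^2/(p x + q x) ≤ 4 * JS p q := by
  have h0 := kl_lower p q hp hq hp1 hq1
  have h1 := kl_lower q p hq hp hq1 hp1
  have hsw : KL q (fun x => (q x + p x)/2) = KL q (fun x => (p x + q x)/2) := by
    unfold KL; congr 1; ext x; simp only []; rw [add_comm (q x) (p x)]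
  rw [hsw] at h1
  have hcomb : ∑ x, (p x - q x)^2/(p x + q x) ≤
      (3/4) * ∑ x, (p x - q x)^2/(2*p x + q x)
      + (3/4) * ∑ x, (q x - p x)^2/(2*q x + p x) := by
    rw [Finset.mul_sum, Finset.mul_sum, ← Finset.sum_add_distrib]
    apply Finset.sum_le_sum
    intro x _
    have := point_combine (p x) (q x) (hp x) (hq x)
    have e1 : (q x - p x)^2 = (p x - q x)^2 := by ring
    have e2 : 2*q x + p x = p x + 2*q x := by ring
    rw [e1, e2]
    linarith
  unfold JS
  linarith


open Classical in
lemma cs_lemma {α : Type*} [Fintype α] (p q : α → ℝ)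
    (hp : ∀ x, 0 ≤ p x) (hq : ∀ x, 0 ≤ q x)
    (hp1 : ∑ x, p x = 1) (hq1 : ∑ x, q x = 1) :
    (∑ x, |p x - q x|)^2 ≤ 2 * ∑ x, (p x - q x)^2/(p x + q x) := by
  set f : α → ℝ := fun x => if 0 < p x + q x then |p x - q x| / Real.sqrt (p x + q x) else 0
  set g : α → ℝ := fun x => Real.sqrt (p x + q x)
  have hfg : ∀ x, f x * g x = |p x - q x| := by
    intro x
    by_cases h : 0 < p x + q x
    · simp only [f, g, if_pos h]
      exact div_mul_cancel₀ _ (Real.sqrt_pos.mpr h).ne'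
    · have hs : p x + q x = 0 := le_antisymm (not_lt.mp h) (add_nonneg (hp x) (hq x))
      have hpx : p x = 0 := by linarith [hp x, hq x]
      have hqx : q x = 0 := by linarith [hp x, hq x]
      simp [f, g, hpx, hqx]
  have hf2 : ∀ x, f x ^ 2 = (p x - q x)^2/(p x + q x) := by
    intro x
    by_cases h : 0 < p x + q x
    · simp only [f, if_pos h]
      rw [div_pow, sq_abs, Real.sq_sqrt (le_of_lt h)]
    · have hs : p x + q x = 0 := le_antisymm (not_lt.mp h) (add_nonneg (hp x) (hq x))
      have hpx : p x = 0 := by linarith [hp x, hq x]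
      have hqx : q x = 0 := by linarith [hp x, hq x]
      simp [f, hpx, hqx]
  have hg2 : ∑ x, g x ^ 2 = 2 := by
    have : ∀ x, g x ^ 2 = p x + q x := by
      intro x
      exact Real.sq_sqrt (add_nonneg (hp x) (hq x))
    rw [Finset.sum_congr rfl (fun x _ => this x), Finset.sum_add_distrib, hp1, hq1]
    norm_num
  have hcs2 : (∑ x, f x * g x)^2 ≤ (∑ x, f x ^2) * (∑ x, g x ^2) :=
    Finset.sum_mul_sq_le_sq_mul_sq Finset.univ f g
  calc (∑ x, |p x - q x|)^2 = (∑ x, f x * g x)^2 := by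
        rw [Finset.sum_congr rfl (fun x _ => (hfg x).symm)]
    _ ≤ (∑ x, f x ^2) * (∑ x, g x ^2) := hcs2
    _ = 2 * ∑ x, (p x - q x)^2/(p x + q x) := by
        rw [hg2, Finset.sum_congr rfl (fun x _ => hf2 x), mul_comm]

open Classical in
lemma tv_lemma {α : Type*} [Fintype α] (d : α → ℝ) (c : α → Fin 2)
    (hd : ∑ x, d x = 0) :
    |∑ x, if c x = 1 then d x else 0| ≤ (1/2) * ∑ x, |d x| := by
  set A := ∑ x, if c x = 1 then d x else 0
  set B := ∑ x, if c x = 1 then 0 else d x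
  have hAB : A + B = 0 := by
    rw [← hd, ← Finset.sum_add_distrib]
    apply Finset.sum_congr rfl
    intro x _
    split_ifs <;> ring
  have habs : |A - B| ≤ ∑ x, |d x| := by
    have : A - B = ∑ x, ((if c x = 1 then d x else 0) - (if c x = 1 then 0 else d x)) := by
      rw [Finset.sum_sub_distrib]
    rw [this]
    refine le_trans (Finset.abs_sum_le_sum_abs _ _) ?_
    apply Finset.sum_le_sum
    intro x _
    split_ifs <;> simp
  have : A = (A - B)/2 := by linarith
  rw [this, abs_div]
  simp only [abs_two]
  linarith [habs]


lemma pr_nonneg {Ω : Type*} [Fintype Ω] (P : Ω → ℝ) (hP0 : ∀ ω, 0 ≤ P ω) (E : Ω → Prop) :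
    0 ≤ pr P E := by
  classical
  unfold pr
  apply Finset.sum_nonneg
  intro ω _
  split_ifs
  · exact hP0 ω
  · exact le_refl 0

lemma pr_mono {Ω : Type*} [Fintype Ω] (P : Ω → ℝ) (hP0 : ∀ ω, 0 ≤ P ω)
    (E F : Ω → Prop) (h : ∀ ω, E ω → F ω) : pr P E ≤ pr P F := by
  classical
  unfold pr
  apply Finset.sum_le_sum
  intro ω _
  split_ifs with h1 h2
  · exact le_refl _
  · exact absurd (h ω h1) h2
  · exact hP0 ω
  · exact le_refl 0

open Classical in
lemma pr_total {Ω α : Type*} [Fintype Ω] [Fintype α] (P : Ω → ℝ)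
    (X : Ω → α) (Q : Ω → Prop) :
    pr P Q = ∑ x, pr P (fun ω => X ω = x ∧ Q ω) := by
  calc pr P Q = ∑ ω, if Q ω then P ω else 0 := by unfold pr; congr!
    _ = ∑ ω, ∑ x, (if X ω = x ∧ Q ω then P ω else 0) := by
        apply Finset.sum_congr rfl
        intro ω _
        by_cases h : Q ω <;> simp [h]
    _ = ∑ x, ∑ ω, (if X ω = x ∧ Q ω then P ω else 0) := Finset.sum_comm
    _ = ∑ x, pr P (fun ω => X ω = x ∧ Q ω) := by
        apply Finset.sum_congr rfl
        intro x _
        unfold pr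
        congr!

open Classical in
lemma pr_decomp {Ω α : Type*} [Fintype Ω] [Fintype α] (P : Ω → ℝ)
    (X : Ω → α) (c : α → Fin 2) (Q : Ω → Prop) :
    pr P (fun ω => c (X ω) = 1 ∧ Q ω)
      = ∑ x, if c x = 1 then pr P (fun ω => X ω = x ∧ Q ω) else 0 := by
  have step2 : ∀ ω, (if c (X ω) = 1 ∧ Q ω then P ω else 0)
      = ∑ x, if c x = 1 ∧ X ω = x ∧ Q ω then P ω else 0 := by
    intro ω
    rw [Finset.sum_eq_single (X ω)]
    · by_cases h1 : c (X ω) = 1 <;> by_cases h2 : Q ω <;> simp [h1, h2]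
    · intro x _ hx
      have hn : ¬(c x = 1 ∧ X ω = x ∧ Q ω) := by
        rintro ⟨_, h, _⟩
        exact hx h.symm
      rw [if_neg hn]
    · intro h
      exact absurd (Finset.mem_univ _) h
  calc pr P (fun ω => c (X ω) = 1 ∧ Q ω)
      = ∑ ω, if c (X ω) = 1 ∧ Q ω then P ω else 0 := by unfold pr; congr!
    _ = ∑ ω, ∑ x, (if c x = 1 ∧ X ω = x ∧ Q ω then P ω else 0) :=
        Finset.sum_congr rfl (fun ω _ => step2 ω)
    _ = ∑ x, ∑ ω, (if c x = 1 ∧ X ω = x ∧ Q ω then P ω else 0) := Finset.sum_comm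
    _ = ∑ x, if c x = 1 then pr P (fun ω => X ω = x ∧ Q ω) else 0 := by
        apply Finset.sum_congr rfl
        intro x _
        by_cases h : c x = 1
        · rw [if_pos h]
          unfold pr
          apply Finset.sum_congr rfl
          intro ω _
          simp [h]
        · rw [if_neg h]
          apply Finset.sum_eq_zero
          intro ω _
          simp [h]

lemma pr_split_S {Ω : Type*} [Fintype Ω] (P : Ω → ℝ) (S : Ω → Fin 2) (Q : Ω → Prop) :
    pr P Q = pr P (fun ω => S ω = 0 ∧ Q ω) + pr P (fun ω => S ω = 1 ∧ Q ω) := by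
  classical
  unfold pr
  rw [← Finset.sum_add_distrib]
  apply Finset.sum_congr rfl
  intro ω _
  rcases (by omega : S ω = 0 ∨ S ω = 1) with h | h <;> by_cases h2 : Q ω <;>
    simp [h, h2]


lemma pr_congr {Ω : Type*} [Fintype Ω] (P : Ω → ℝ) (E F : Ω → Prop)
    (h : ∀ ω, E ω ↔ F ω) : pr P E = pr P F := by
  classical
  unfold pr
  apply Finset.sum_congr rfl
  intro ω _
  by_cases hE : E ω
  · rw [if_pos hE, if_pos ((h ω).mp hE)]
  · rw [if_neg hE, if_neg (fun hF => hE ((h ω).mpr hF))]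


open Classical in
lemma main_combine {α : Type*} [Fintype α] (q0 q1 : α → ℝ) (c : α → Fin 2)
    (hq0nn : ∀ x, 0 ≤ q0 x) (hq1nn : ∀ x, 0 ≤ q1 x)
    (hq0s : ∑ x, q0 x = 1) (hq1s : ∑ x, q1 x = 1)
    (a0 b0 a1 b1 : ℝ) (hb0 : 0 < b0) (hb1 : 0 < b1)
    (hp0 : a0/b0 = ∑ x, if c x = 1 then q0 x else 0)
    (hp1 : a1/b1 = ∑ x, if c x = 1 then q1 x else 0) :
    (a0 + a1)/(b0 + b1) ≤ (a0/b0 + a1/b1)/2 + 1/2 * Real.sqrt (2 * JS q0 q1) := by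
  set p0 := a0/b0 with hp0def
  set p1 := a1/b1 with hp1def
  have hsum0 : ∑ x, (q0 x - q1 x) = 0 := by
    rw [Finset.sum_sub_distrib, hq0s, hq1s]; ring
  have htv := tv_lemma (fun x => q0 x - q1 x) c hsum0
  have hsplit : (∑ x, if c x = 1 then q0 x - q1 x else 0) = p0 - p1 := by
    rw [hp0, hp1, ← Finset.sum_sub_distrib]
    apply Finset.sum_congr rfl
    intro x _
    split_ifs <;> ring
  rw [hsplit] at htv
  have hcs := cs_lemma q0 q1 hq0nn hq1nn hq0s hq1s
  have hjs := js_lower q0 q1 hq0nn hq1nn hq0s hq1s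
  have hDnn : 0 ≤ ∑ x, (q0 x - q1 x)^2/(q0 x + q1 x) := by
    apply Finset.sum_nonneg
    intro x _
    exact div_nonneg (sq_nonneg _) (add_nonneg (hq0nn x) (hq1nn x))
  have habs_nn : (0:ℝ) ≤ ∑ x, |q0 x - q1 x| :=
    Finset.sum_nonneg (fun x _ => abs_nonneg _)
  have h1 : |p0 - p1|^2 ≤ 2 * JS q0 q1 := by
    nlinarith [abs_nonneg (p0 - p1), htv, hcs, hjs, hDnn, habs_nn]
  have h2 : |p0 - p1| ≤ Real.sqrt (2 * JS q0 q1) := by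
    have := Real.sqrt_le_sqrt h1
    rwa [Real.sqrt_sq_eq_abs, abs_abs] at this
  have ha0 : a0 = p0 * b0 := by rw [hp0def, div_mul_cancel₀ _ hb0.ne']
  have ha1 : a1 = p1 * b1 := by rw [hp1def, div_mul_cancel₀ _ hb1.ne']
  have hM0 : p0 ≤ (p0 + p1)/2 + |p0 - p1|/2 := by
    have := le_abs_self (p0 - p1); linarith
  have hM1 : p1 ≤ (p0 + p1)/2 + |p0 - p1|/2 := by
    have := neg_abs_le (p0 - p1); linarith
  have hstep : (a0 + a1)/(b0 + b1) ≤ (p0 + p1)/2 + |p0 - p1|/2 := by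
    rw [div_le_iff₀ (by linarith)]
    have k0 : p0 * b0 ≤ ((p0 + p1)/2 + |p0 - p1|/2) * b0 :=
      mul_le_mul_of_nonneg_right hM0 hb0.le
    have k1 : p1 * b1 ≤ ((p0 + p1)/2 + |p0 - p1|/2) * b1 :=
      mul_le_mul_of_nonneg_right hM1 hb1.le
    rw [ha0, ha1]
    nlinarith [k0, k1]
  calc (a0 + a1)/(b0 + b1) ≤ (p0 + p1)/2 + |p0 - p1|/2 := hstep
    _ ≤ (p0 + p1)/2 + 1/2 * Real.sqrt (2 * JS q0 q1) := by linarith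


/-- `FPR ≤ (p₀+p₁)/2 + ½·√(2·JS(q₀,q₁))`. -/
theorem stmt10 {Ω α : Type*} [Fintype Ω] [Fintype α]
    (P : Ω → ℝ) (hP0 : ∀ ω, 0 ≤ P ω) (hP1 : ∑ ω, P ω = 1)
    (S : Ω → Fin 2) (Y : Ω → Fin 2)
    (hSY : ∀ s, 0 < pr P (fun ω => S ω = s ∧ Y ω = 0))
    (X : Ω → α) (c : α → Fin 2) :
    pr P (fun ω => c (X ω) = 1 ∧ Y ω = 0) / pr P (fun ω => Y ω = 0) ≤
      (pr P (fun ω => c (X ω) = 1 ∧ S ω = 0 ∧ Y ω = 0) /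
            pr P (fun ω => S ω = 0 ∧ Y ω = 0)
          + pr P (fun ω => c (X ω) = 1 ∧ S ω = 1 ∧ Y ω = 0) /
            pr P (fun ω => S ω = 1 ∧ Y ω = 0)) / 2
        + 1 / 2 *
          Real.sqrt (2 *
            JS (fun x => pr P (fun ω => X ω = x ∧ S ω = 0 ∧ Y ω = 0) /
                  pr P (fun ω => S ω = 0 ∧ Y ω = 0))
               (fun x => pr P (fun ω => X ω = x ∧ S ω = 1 ∧ Y ω = 0) /
                  pr P (fun ω => S ω = 1 ∧ Y ω = 0))) := by
  classical
  have hb0 : 0 < pr P (fun ω => S ω = 0 ∧ Y ω = 0) := hSY 0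
  have hb1 : 0 < pr P (fun ω => S ω = 1 ∧ Y ω = 0) := hSY 1
  have hnum : pr P (fun ω => c (X ω) = 1 ∧ Y ω = 0)
      = pr P (fun ω => c (X ω) = 1 ∧ S ω = 0 ∧ Y ω = 0)
        + pr P (fun ω => c (X ω) = 1 ∧ S ω = 1 ∧ Y ω = 0) := by
    rw [pr_split_S P S (fun ω => c (X ω) = 1 ∧ Y ω = 0)]
    congr 1
    · exact pr_congr P _ _ (fun ω => by tauto)
    · exact pr_congr P _ _ (fun ω => by tauto)
  have hden : pr P (fun ω => Y ω = 0)
      = pr P (fun ω => S ω = 0 ∧ Y ω = 0) + pr P (fun ω => S ω = 1 ∧ Y ω = 0) :=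
    pr_split_S P S (fun ω => Y ω = 0)
  have hq0nn : ∀ x : α, 0 ≤ pr P (fun ω => X ω = x ∧ S ω = 0 ∧ Y ω = 0) /
      pr P (fun ω => S ω = 0 ∧ Y ω = 0) :=
    fun x => div_nonneg (pr_nonneg P hP0 _) hb0.le
  have hq1nn : ∀ x : α, 0 ≤ pr P (fun ω => X ω = x ∧ S ω = 1 ∧ Y ω = 0) /
      pr P (fun ω => S ω = 1 ∧ Y ω = 0) :=
    fun x => div_nonneg (pr_nonneg P hP0 _) hb1.le
  have hq0s : ∑ x : α, pr P (fun ω => X ω = x ∧ S ω = 0 ∧ Y ω = 0) /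
      pr P (fun ω => S ω = 0 ∧ Y ω = 0) = 1 := by
    rw [← Finset.sum_div, ← pr_total P X (fun ω => S ω = 0 ∧ Y ω = 0)]
    exact div_self hb0.ne'
  have hq1s : ∑ x : α, pr P (fun ω => X ω = x ∧ S ω = 1 ∧ Y ω = 0) /
      pr P (fun ω => S ω = 1 ∧ Y ω = 0) = 1 := by
    rw [← Finset.sum_div, ← pr_total P X (fun ω => S ω = 1 ∧ Y ω = 0)]
    exact div_self hb1.ne'
  have hp0 : pr P (fun ω => c (X ω) = 1 ∧ S ω = 0 ∧ Y ω = 0) /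
      pr P (fun ω => S ω = 0 ∧ Y ω = 0)
      = ∑ x : α, if c x = 1 then pr P (fun ω => X ω = x ∧ S ω = 0 ∧ Y ω = 0) /
          pr P (fun ω => S ω = 0 ∧ Y ω = 0) else 0 := by
    rw [pr_decomp P X c (fun ω => S ω = 0 ∧ Y ω = 0), Finset.sum_div]
    apply Finset.sum_congr rfl
    intro x _
    split_ifs with h
    · rfl
    · exact zero_div _
  have hp1 : pr P (fun ω => c (X ω) = 1 ∧ S ω = 1 ∧ Y ω = 0) /
      pr P (fun ω => S ω = 1 ∧ Y ω = 0)
      = ∑ x : α, if c x = 1 then pr P (fun ω => X ω = x ∧ S ω = 1 ∧ Y ω = 0) /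
          pr P (fun ω => S ω = 1 ∧ Y ω = 0) else 0 := by
    rw [pr_decomp P X c (fun ω => S ω = 1 ∧ Y ω = 0), Finset.sum_div]
    apply Finset.sum_congr rfl
    intro x _
    split_ifs with h
    · rfl
    · exact zero_div _
  rw [hnum, hden]
  exact main_combine _ _ c hq0nn hq1nn hq0s hq1s _ _ _ _ hb0 hb1 hp0 hp1
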